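/- Let C ⊆ F^n be a perfect binary code containing the all-zero vector, λ : C → ZMod 2 a map with λ(0) = 0, and C' = {(x + y, |x| + λ(y), x) : x ∈ F^n, y ∈ C} ⊆ F^{2n+1} the Vasil'ev code. Then rank(C') = rank(C) + n + 1 if and only if the standard basis vector e_{n+1} of F^{2n+1} (the vector with 1 in the middle coordinate and 0 elsewhere) belongs to the linear span of C'; otherwise rank(C') = rank(C) + n. -/

import Mathlib

open Finset

/-- The binary vector space `F^n`. -/
abbrev F (n : ℕ) : Type := Fin n → ZMod 2

/-- Action of a coordinate permutation: `(π x) i = x (π⁻¹ i)`. -/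
def permAct {n : ℕ} (π : Equiv.Perm (Fin n)) (x : F n) : F n := fun i => x (π⁻¹ i)

/-- `(v, π)` is an isometry fixing the code `C` set-wise. -/
def IsIsoPair {n : ℕ} (C : Set (F n)) (v : F n) (π : Equiv.Perm (Fin n)) : Prop :=
  (fun x => v + permAct π x) '' C = C

/-- `C` is a single-error-correcting perfect binary code. -/
def IsPerfectCode {n : ℕ} (C : Set (F n)) : Prop :=
  ∀ x : F n, ∃! y : F n, y ∈ C ∧ hammingDist x y ≤ 1

/-- `P` is a propelinear structure on the code `C`. -/
def IsPropStructure {n : ℕ} (C : Set (F n)) (P : F n → Equiv.Perm (Fin n)) : Prop :=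
  (∀ x ∈ C, IsIsoPair C x (P x)) ∧
  (∀ x ∈ C, ∀ y ∈ C, P (x + permAct (P x) y) = P x * P y)

/-- `C` admits a propelinear structure. -/
def IsPropelinear {n : ℕ} (C : Set (F n)) : Prop :=
  ∃ P : F n → Equiv.Perm (Fin n), IsPropStructure C P

/-- The rank of a code: dimension of its linear span over GF(2). -/
noncomputable def codeRank {n : ℕ} (C : Set (F n)) : ℕ :=
  Module.finrank (ZMod 2) (Submodule.span (ZMod 2) C)

/-- The kernel of a code `C`: codewords whose translate fixes `C`. -/
def codeKernel {n : ℕ} (C : Set (F n)) : Set (F n) :=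
  {x ∈ C | (fun c => x + c) '' C = C}

/-- A propelinear structure is normalized if codewords in the same coset
of the kernel get the same permutation. -/
def IsNormalized {n : ℕ} (C : Set (F n)) (P : F n → Equiv.Perm (Fin n)) : Prop :=
  ∀ x ∈ C, ∀ y ∈ C, x + y ∈ codeKernel C → P x = P y

/-- A code is transitive if its automorphism group acts transitively on it. -/
def IsTransitive {n : ℕ} (C : Set (F n)) : Prop :=
  ∀ x ∈ C, ∀ y ∈ C, ∃ v π, IsIsoPair C v π ∧ v + permAct π x = y

/-- The (ZMod 2) weight parity `|x| = Σ_i x_i`. -/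
def wt {n : ℕ} (x : F n) : ZMod 2 := ∑ i, x i

/-- Assemble a vector of `F^(2n+1)` from a first block of `n` coordinates,
a middle coordinate and a last block of `n` coordinates. -/
def vasVec {n : ℕ} (a : F n) (b : ZMod 2) (c : F n) : F (2 * n + 1) :=
  fun i =>
    if h : (i : ℕ) < n then a ⟨i, h⟩
    else if h' : (i : ℕ) = n then b
    else c ⟨(i : ℕ) - (n + 1), by have := i.isLt; omega⟩

/-- The Vasil'ev code of `C` with function `lam`. -/
def vasCode {n : ℕ} (C : Set (F n)) (lam : F n → ZMod 2) : Set (F (2 * n + 1)) :=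
  {w | ∃ x : F n, ∃ y ∈ C, w = vasVec (x + y) (wt x + lam y) x}

/-- Assemble a vector of `F^(tm+t+m)` from blocks of `tm`, `t` and `m` coordinates. -/
def mollVec {t m : ℕ} (x : F (t * m)) (b : F t) (c : F m) : F (t * m + t + m) :=
  fun i =>
    if h : (i : ℕ) < t * m then x ⟨i, h⟩
    else if h' : (i : ℕ) < t * m + t then b ⟨(i : ℕ) - t * m, by omega⟩
    else c ⟨(i : ℕ) - (t * m + t), by have := i.isLt; omega⟩

/-- First generalized parity-check function: `p1(x)_i = Σ_j x_{ij}`. -/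
def p1 {t m : ℕ} (x : F (t * m)) : F t := fun i => ∑ j : Fin m, x (finProdFinEquiv (i, j))

/-- Second generalized parity-check function: `p2(x)_j = Σ_i x_{ij}`. -/
def p2 {t m : ℕ} (x : F (t * m)) : F m := fun j => ∑ i : Fin t, x (finProdFinEquiv (i, j))

/-- The Mollard code of `Ct` and `Cm` with function `f`. -/
def mollCode {t m : ℕ} (Ct : Set (F t)) (Cm : Set (F m)) (f : F t → F m) :
    Set (F (t * m + t + m)) :=
  {w | ∃ x : F (t * m), ∃ y ∈ Ct, ∃ z ∈ Cm, w = mollVec x (y + p1 x) (z + p2 x + f y)}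

section Aux

variable {n : ℕ}

def idxL (n : ℕ) (i : Fin n) : Fin (2 * n + 1) := ⟨i, by omega⟩
def idxR (n : ℕ) (i : Fin n) : Fin (2 * n + 1) := ⟨n + 1 + i, by omega⟩
def midIdx (n : ℕ) : Fin (2 * n + 1) := ⟨n, by omega⟩

@[simp] lemma vasVec_idxL (a : F n) (b : ZMod 2) (c : F n) (i : Fin n) :
    vasVec a b c (idxL n i) = a i := by
  simp [vasVec, idxL]

@[simp] lemma vasVec_midIdx (a : F n) (b : ZMod 2) (c : F n) :
    vasVec a b c (midIdx n) = b := by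
  simp [vasVec, midIdx]

@[simp] lemma vasVec_idxR (a : F n) (b : ZMod 2) (c : F n) (i : Fin n) :
    vasVec a b c (idxR n i) = c i := by
  have h1 : ¬ ((n + 1 + (i : ℕ)) < n) := by omega
  have h2 : ¬ ((n + 1 + (i : ℕ)) = n) := by omega
  show (if h : n + 1 + (i : ℕ) < n then a ⟨n + 1 + (i : ℕ), h⟩
    else if h' : n + 1 + (i : ℕ) = n then b
    else c ⟨n + 1 + (i : ℕ) - (n + 1), by have := i.isLt; omega⟩) = c i
  rw [dif_neg h1, dif_neg h2]
  congr 1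
  apply Fin.ext
  show n + 1 + (i : ℕ) - (n + 1) = (i : ℕ)
  omega

lemma vasVec_ext (w : F (2 * n + 1)) :
    vasVec (fun i => w (idxL n i)) (w (midIdx n)) (fun i => w (idxR n i)) = w := by
  funext j
  rcases lt_trichotomy (j : ℕ) n with h | h | h
  · have : j = idxL n ⟨j, h⟩ := by simp [idxL]
    rw [this, vasVec_idxL]
  · have : j = midIdx n := Fin.ext h
    rw [this, vasVec_midIdx]
  · have hj := j.isLt
    have : j = idxR n ⟨(j : ℕ) - (n + 1), by omega⟩ := by
      apply Fin.ext; simp [idxR]; omega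
    rw [this, vasVec_idxR]

lemma vasVec_add (a a' : F n) (b b' : ZMod 2) (c c' : F n) :
    vasVec (a + a') (b + b') (c + c') = vasVec a b c + vasVec a' b' c' := by
  funext j
  simp only [vasVec, Pi.add_apply]
  split_ifs <;> rfl

lemma vasVec_smul (r : ZMod 2) (a : F n) (b : ZMod 2) (c : F n) :
    vasVec (r • a) (r • b) (r • c) = r • vasVec a b c := by
  funext j
  simp only [vasVec, Pi.smul_apply]
  split_ifs <;> rfl

def Tl (n : ℕ) : F (2 * n + 1) →ₗ[ZMod 2] F n × (F n × ZMod 2) where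
  toFun w := (fun i => w (idxR n i),
    (fun i => w (idxL n i) + w (idxR n i), w (midIdx n) + ∑ i, w (idxR n i)))
  map_add' u v := by
    simp only [Pi.add_apply, Prod.mk_add_mk, Prod.mk.injEq]
    refine ⟨rfl, ?_, ?_⟩
    · funext i; simp only [Pi.add_apply]; ring
    · rw [Finset.sum_add_distrib]; ring
  map_smul' r w := by
    simp only [Pi.smul_apply, smul_eq_mul, Prod.smul_mk, RingHom.id_apply, Prod.mk.injEq]
    refine ⟨rfl, ?_, ?_⟩
    · funext i; simp only [Pi.smul_apply, smul_eq_mul]; ring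
    · simp only [mul_add, Finset.mul_sum]

lemma wt_add (u v : F n) : wt (u + v) = wt u + wt v := by
  simp [wt, Finset.sum_add_distrib]

lemma wt_smul (r : ZMod 2) (u : F n) : wt (r • u) = r * wt u := by
  simp [wt, Finset.mul_sum]

def Gl (n : ℕ) : (F n × (F n × ZMod 2)) →ₗ[ZMod 2] F (2 * n + 1) where
  toFun p := vasVec (p.1 + p.2.1) (p.2.2 + wt p.1) p.1
  map_add' u v := by
    rw [← vasVec_add]
    simp only [Prod.fst_add, Prod.snd_add, wt_add]
    congr 1 <;> abel
  map_smul' r p := by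
    rw [← vasVec_smul]
    simp only [RingHom.id_apply, Prod.smul_fst, Prod.smul_snd, wt_smul, smul_add, smul_eq_mul,
      mul_add]

lemma z2 : ∀ a b : ZMod 2, b + (a + b) = a := by decide
lemma z2' : ∀ a b : ZMod 2, a + b + b = a := by decide
lemma z2'' : ∀ a b : ZMod 2, a + b + a = b := by decide

lemma Gl_Tl (w : F (2 * n + 1)) : Gl n (Tl n w) = w := by
  show vasVec _ _ _ = w
  have h1 : ((fun i => w (idxR n i)) + fun i => w (idxL n i) + w (idxR n i)) =
      fun i => w (idxL n i) := by funext i; exact z2 _ _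
  have h2 : w (midIdx n) + (∑ i, w (idxR n i)) + wt (fun i => w (idxR n i)) =
      w (midIdx n) := by rw [wt]; exact z2' _ _
  show vasVec ((fun i => w (idxR n i)) + fun i => w (idxL n i) + w (idxR n i))
      (w (midIdx n) + (∑ i, w (idxR n i)) + wt (fun i => w (idxR n i)))
      (fun i => w (idxR n i)) = w
  rw [h1, h2, vasVec_ext]

lemma Tl_Gl (p : F n × (F n × ZMod 2)) : Tl n (Gl n p) = p := by
  obtain ⟨x, y, b⟩ := p
  refine Prod.ext ?_ (Prod.ext ?_ ?_)
  · funext i; simp [Tl, Gl]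
  · funext i
    simp only [Tl, Gl, LinearMap.coe_mk, AddHom.coe_mk, vasVec_idxL, vasVec_idxR, Pi.add_apply]
    exact z2'' _ _
  · simp only [Tl, Gl, LinearMap.coe_mk, AddHom.coe_mk, vasVec_midIdx, vasVec_idxR]
    show b + wt x + ∑ i, x i = b
    rw [wt]; exact z2' _ _

noncomputable def Teq (n : ℕ) : F (2 * n + 1) ≃ₗ[ZMod 2] F n × (F n × ZMod 2) :=
  LinearEquiv.ofLinear (Tl n) (Gl n) (LinearMap.ext Tl_Gl) (LinearMap.ext Gl_Tl)

@[simp] lemma Teq_apply (w : F (2 * n + 1)) : Teq n w = Tl n w := rfl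

end Aux

set_option maxHeartbeats 1000000 in
/-- The rank of the Vasil'ev code equals `rank(C) + n + 1` iff the middle
standard basis vector lies in its span; otherwise it equals `rank(C) + n`. -/
theorem vasilev_rank_dichotomy {n : ℕ} (C : Set (F n))
    (hC : IsPerfectCode C) (h0 : (0 : F n) ∈ C)
    (lam : F n → ZMod 2) (hlam0 : lam 0 = 0) :
    (codeRank (vasCode C lam) = codeRank C + n + 1 ↔
      (fun i : Fin (2 * n + 1) => if (i : ℕ) = n then (1 : ZMod 2) else 0) ∈
        Submodule.span (ZMod 2) (vasCode C lam)) ∧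
    ((fun i : Fin (2 * n + 1) => if (i : ℕ) = n then (1 : ZMod 2) else 0) ∉
        Submodule.span (ZMod 2) (vasCode C lam) →
      codeRank (vasCode C lam) = codeRank C + n) := by
  classical
  set e0 : F (2 * n + 1) := fun i : Fin (2 * n + 1) => if (i : ℕ) = n then (1 : ZMod 2) else 0
    with he0
  set Tm : F (2 * n + 1) →ₗ[ZMod 2] F n × (F n × ZMod 2) := (Teq n).toLinearMap with hTm
  set D : Set (F n × (F n × ZMod 2)) := {p | ∃ y ∈ C, p.2 = (y, lam y)} with hDdef
  set E : Set (F n × ZMod 2) := {p | ∃ y ∈ C, p = (y, lam y)} with hEdef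
  set V : Submodule (ZMod 2) (F n × (F n × ZMod 2)) := Submodule.span (ZMod 2) D with hVdef
  set W : Submodule (ZMod 2) (F n × ZMod 2) := Submodule.span (ZMod 2) E with hWdef
  have hTmapp : ∀ w, Tm w = Tl n w := fun _ => rfl
  -- computation of Tm on codewords
  have hTw : ∀ (x y : F n) (b : ZMod 2), Tm (vasVec (x + y) (wt x + b) x) = (x, (y, b)) := by
    intro x y b
    rw [hTmapp]
    refine Prod.ext ?_ (Prod.ext ?_ ?_)
    · funext i
      simp [Tl]
    · funext i
      simp only [Tl, LinearMap.coe_mk, AddHom.coe_mk, vasVec_idxL, vasVec_idxR, Pi.add_apply]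
      exact z2'' _ _
    · simp only [Tl, LinearMap.coe_mk, AddHom.coe_mk, vasVec_midIdx, vasVec_idxR]
      show wt x + b + wt x = b
      exact z2'' _ _
  -- the image of the Vasil'ev code
  have himg : ⇑Tm '' vasCode C lam = D := by
    ext p
    constructor
    · rintro ⟨w, ⟨x, y, hy, rfl⟩, rfl⟩
      refine ⟨y, hy, ?_⟩
      rw [hTw x y (lam y)]
    · rintro ⟨y, hy, hp⟩
      refine ⟨vasVec (p.1 + y) (wt p.1 + lam y) p.1, ⟨p.1, y, hy, rfl⟩, ?_⟩
      rw [hTw p.1 y (lam y)]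
      exact Prod.ext rfl hp.symm
  have hmapspan : Submodule.map Tm (Submodule.span (ZMod 2) (vasCode C lam)) = V := by
    rw [Submodule.map_span, himg]
  -- snd-related facts
  have hsndD : (Prod.snd : F n × (F n × ZMod 2) → F n × ZMod 2) '' D = E := by
    ext p
    constructor
    · rintro ⟨q, ⟨y, hy, hq⟩, rfl⟩
      exact ⟨y, hy, hq⟩
    · rintro ⟨y, hy, rfl⟩
      exact ⟨(0, (y, lam y)), ⟨y, hy, rfl⟩, rfl⟩
  have hVsnd : Submodule.map (LinearMap.snd (ZMod 2) (F n) (F n × ZMod 2)) V = W := by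
    rw [hVdef, Submodule.map_span]
    exact congrArg _ hsndD
  have hxD : ∀ x : F n, ((x, ((0 : F n), (0 : ZMod 2))) : F n × (F n × ZMod 2)) ∈ D := by
    intro x
    exact ⟨0, h0, by simp [hlam0]⟩
  -- rank of V via rank-nullity on snd
  have hVrank : Module.finrank (ZMod 2) V = Module.finrank (ZMod 2) W + n := by
    set φ : V →ₗ[ZMod 2] F n × ZMod 2 :=
      (LinearMap.snd (ZMod 2) (F n) (F n × ZMod 2)).comp V.subtype with hφ
    have hrange : LinearMap.range φ = W := by
      rw [hφ, LinearMap.range_comp, Submodule.range_subtype, hVsnd]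
    have hker : Module.finrank (ZMod 2) (LinearMap.ker φ) = n := by
      set ψ : LinearMap.ker φ →ₗ[ZMod 2] F n :=
        (LinearMap.fst (ZMod 2) (F n) (F n × ZMod 2)).comp
          (V.subtype.comp (LinearMap.ker φ).subtype) with hψ
      have hinj : Function.Injective ψ := by
        intro a b hab
        have ha : ((a : V) : F n × (F n × ZMod 2)).2 = 0 := LinearMap.mem_ker.mp a.2
        have hb : ((b : V) : F n × (F n × ZMod 2)).2 = 0 := LinearMap.mem_ker.mp b.2
        apply Subtype.ext
        apply Subtype.ext
        exact Prod.ext hab (ha.trans hb.symm)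
      have hsurj : Function.Surjective ψ := by
        intro x
        refine ⟨⟨⟨(x, 0), Submodule.subset_span (hxD x)⟩, LinearMap.mem_ker.mpr rfl⟩, rfl⟩
      exact ((LinearEquiv.ofBijective ψ ⟨hinj, hsurj⟩).finrank_eq).trans
        (Module.finrank_fin_fun (ZMod 2))
    have hrn := LinearMap.finrank_range_add_finrank_ker φ
    rw [hrange, hker] at hrn
    omega
  -- rank of W via rank-nullity on fst
  set ψ2 : W →ₗ[ZMod 2] F n :=
    (LinearMap.fst (ZMod 2) (F n) (ZMod 2)).comp W.subtype with hψ2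
  have hfstE : (Prod.fst : F n × ZMod 2 → F n) '' E = C := by
    ext y
    constructor
    · rintro ⟨q, ⟨z, hz, rfl⟩, rfl⟩
      exact hz
    · intro hy
      exact ⟨(y, lam y), ⟨y, hy, rfl⟩, rfl⟩
  have hrange2 : LinearMap.range ψ2 = Submodule.span (ZMod 2) C := by
    rw [hψ2, LinearMap.range_comp, Submodule.range_subtype, hWdef, Submodule.map_span]
    have hco : ⇑(LinearMap.fst (ZMod 2) (F n) (ZMod 2)) = Prod.fst := rfl
    rw [hco, hfstE]
  have hWrank : Module.finrank (ZMod 2) W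
      = codeRank C + Module.finrank (ZMod 2) (LinearMap.ker ψ2) := by
    have hrn := LinearMap.finrank_range_add_finrank_ker ψ2
    rw [hrange2] at hrn
    rw [codeRank, ← hrn]
  -- the image of e0
  have hTe0 : Tm e0 = ((0 : F n), ((0 : F n), (1 : ZMod 2))) := by
    rw [hTmapp]
    have hR : ∀ i : Fin n, e0 (idxR n i) = 0 := by
      intro i
      rw [he0]
      show (if n + 1 + (i : ℕ) = n then (1 : ZMod 2) else 0) = 0
      rw [if_neg (by omega)]
    have hL : ∀ i : Fin n, e0 (idxL n i) = 0 := by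
      intro i
      rw [he0]
      show (if (i : ℕ) = n then (1 : ZMod 2) else 0) = 0
      rw [if_neg (by omega)]
    have hM : e0 (midIdx n) = 1 := by
      rw [he0]
      simp [midIdx]
    refine Prod.ext ?_ (Prod.ext ?_ ?_)
    · funext i
      show e0 (idxR n i) = 0
      exact hR i
    · funext i
      show e0 (idxL n i) + e0 (idxR n i) = 0
      rw [hL i, hR i, add_zero]
    · show e0 (midIdx n) + ∑ i, e0 (idxR n i) = 1
      rw [hM]
      rw [Finset.sum_congr rfl fun i _ => hR i]
      simp
  -- membership equivalence
  have he0mem : e0 ∈ Submodule.span (ZMod 2) (vasCode C lam) ↔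
      (((0 : F n), (1 : ZMod 2)) : F n × ZMod 2) ∈ W := by
    constructor
    · intro h
      have h1 : Tm e0 ∈ Submodule.map Tm (Submodule.span (ZMod 2) (vasCode C lam)) :=
        Submodule.mem_map_of_mem h
      rw [hmapspan, hTe0] at h1
      have h2 := Submodule.mem_map_of_mem
        (f := LinearMap.snd (ZMod 2) (F n) (F n × ZMod 2)) h1
      rw [hVsnd] at h2
      exact h2
    · intro h
      have h2 : (LinearMap.inr (ZMod 2) (F n) (F n × ZMod 2)) ((0 : F n), (1 : ZMod 2)) ∈
          Submodule.map (LinearMap.inr (ZMod 2) (F n) (F n × ZMod 2)) W :=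
        Submodule.mem_map_of_mem h
      have h3 : Submodule.map (LinearMap.inr (ZMod 2) (F n) (F n × ZMod 2)) W ≤ V := by
        rw [hWdef, Submodule.map_span]
        apply Submodule.span_mono
        rintro _ ⟨p, ⟨y, hy, rfl⟩, rfl⟩
        exact ⟨y, hy, rfl⟩
      have h4 : (((0 : F n), ((0 : F n), (1 : ZMod 2))) : F n × (F n × ZMod 2)) ∈ V := h3 h2
      have h5 : Tm e0 ∈ Submodule.map Tm (Submodule.span (ZMod 2) (vasCode C lam)) := by
        rw [hmapspan, hTe0]
        exact h4
      obtain ⟨w, hw, hwe⟩ := h5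
      have hweq : w = e0 := (Teq n).injective hwe
      exact hweq ▸ hw
  -- rank of the Vasil'ev code
  have hrankV : codeRank (vasCode C lam) = Module.finrank (ZMod 2) V := by
    rw [codeRank, ← hmapspan]
    exact (LinearEquiv.finrank_map_eq (Teq n) _).symm
  by_cases hmem : (((0 : F n), (1 : ZMod 2)) : F n × ZMod 2) ∈ W
  · -- kernel of ψ2 has dimension 1
    have hker2 : Module.finrank (ZMod 2) (LinearMap.ker ψ2) = 1 := by
      set u : LinearMap.ker ψ2 := ⟨⟨((0 : F n), (1 : ZMod 2)), hmem⟩, LinearMap.mem_ker.mpr rfl⟩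
        with hu
      set χ : LinearMap.ker ψ2 →ₗ[ZMod 2] ZMod 2 :=
        (LinearMap.snd (ZMod 2) (F n) (ZMod 2)).comp
          (W.subtype.comp (LinearMap.ker ψ2).subtype) with hχ
      have hinj : Function.Injective χ := by
        intro a b hab
        have ha : ((a : W) : F n × ZMod 2).1 = 0 := LinearMap.mem_ker.mp a.2
        have hb : ((b : W) : F n × ZMod 2).1 = 0 := LinearMap.mem_ker.mp b.2
        apply Subtype.ext
        apply Subtype.ext
        exact Prod.ext (ha.trans hb.symm) hab
      have hsurj : Function.Surjective χ := by
        intro b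
        refine ⟨b • u, ?_⟩
        rw [map_smul]
        show b • (1 : ZMod 2) = b
        rw [smul_eq_mul, mul_one]
      exact ((LinearEquiv.ofBijective χ ⟨hinj, hsurj⟩).finrank_eq).trans
        (Module.finrank_self (ZMod 2))
    have hrk : codeRank (vasCode C lam) = codeRank C + n + 1 := by
      rw [hrankV, hVrank, hWrank, hker2]
      omega
    refine ⟨⟨fun _ => he0mem.mpr hmem, fun _ => hrk⟩, fun hn => absurd (he0mem.mpr hmem) hn⟩
  · -- kernel of ψ2 is trivial
    have hker2 : Module.finrank (ZMod 2) (LinearMap.ker ψ2) = 0 := by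
      have hbot : LinearMap.ker ψ2 = ⊥ := by
        rw [Submodule.eq_bot_iff]
        intro a ha
        have h1 : ((a : F n × ZMod 2)).1 = 0 := LinearMap.mem_ker.mp ha
        rcases (show ∀ b : ZMod 2, b = 0 ∨ b = 1 by decide) ((a : F n × ZMod 2)).2 with h2 | h2
        · exact Subtype.ext (Prod.ext h1 h2)
        · exfalso
          have : ((a : F n × ZMod 2)) = ((0 : F n), (1 : ZMod 2)) := Prod.ext h1 h2
          exact hmem (this ▸ a.2)
      rw [hbot]
      exact finrank_bot (ZMod 2) _
    have hrk : codeRank (vasCode C lam) = codeRank C + n := by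
      rw [hrankV, hVrank, hWrank, hker2]
      omega
    refine ⟨⟨fun h => ?_, fun h => absurd (he0mem.mp h) hmem⟩, fun _ => hrk⟩
    rw [hrk] at h
    omega
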